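/- Degree centrality violates Self-consistency: there exists a connected graph with vertices u, v and a bijection from N_u to N_v that is pointwise ≤ in degree with at least one strict inequality, but deg(u) = deg(v). -/

import Mathlib

def Gadj : Fin 5 → Fin 5 → Prop := fun a b =>
  (a = 0 ∧ b = 1) ∨ (a = 1 ∧ b = 0) ∨
  (a = 1 ∧ b = 2) ∨ (a = 2 ∧ b = 1) ∨
  (a = 2 ∧ b = 3) ∨ (a = 3 ∧ b = 2) ∨
  (a = 2 ∧ b = 4) ∨ (a = 4 ∧ b = 2)

instance : DecidableRel Gadj := fun a b => by unfold Gadj; infer_instance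

def Gex : SimpleGraph (Fin 5) where
  Adj := Gadj
  symm := ⟨by show ∀ a b, Gadj a b → Gadj b a; unfold Gadj; decide⟩
  loopless := ⟨by show ∀ a, ¬ Gadj a a; unfold Gadj; decide⟩

instance : DecidableRel Gex.Adj := fun a b => by
  show Decidable (Gadj a b); infer_instance

lemma Gex_conn : Gex.Connected := by
  rw [SimpleGraph.connected_iff]
  refine ⟨fun a b => ?_, ⟨0⟩⟩
  have h01 : Gex.Adj 0 1 := by decide
  have h12 : Gex.Adj 1 2 := by decide
  have h23 : Gex.Adj 2 3 := by decide
  have h24 : Gex.Adj 2 4 := by decide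
  have r0 : ∀ c : Fin 5, Gex.Reachable 0 c := by
    intro c
    fin_cases c
    · rfl
    · exact h01.reachable
    · exact h01.reachable.trans h12.reachable
    · exact (h01.reachable.trans h12.reachable).trans h23.reachable
    · exact (h01.reachable.trans h12.reachable).trans h24.reachable
  exact (r0 a).symm.trans (r0 b)

lemma card_nbr (a : Fin 5) :
    Nat.card {x | Gex.Adj a x} = (Finset.univ.filter (Gex.Adj a)).card := by
  rw [Nat.card_eq_fintype_card]
  exact (Set.toFinset_card _).symm.trans (by congr 1; ext x; simp)

/-- Degree centrality violates Self-consistency: there is a finite connected graph with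
vertices `u, v` and a bijection from `N_u` to `N_v` that is pointwise `≤` in degree with
at least one strict inequality, but `deg(u) = deg(v)`. -/
theorem degree_violates_self_consistency :
    ∃ (n : ℕ) (G : SimpleGraph (Fin n)) (u v : Fin n),
      G.Connected ∧
      ∃ φ : {w // G.Adj u w} ≃ {w // G.Adj v w},
        (∀ w : {w // G.Adj u w},
          Nat.card {x | G.Adj w.1 x} ≤ Nat.card {x | G.Adj (φ w).1 x}) ∧
        (∃ w : {w // G.Adj u w},
          Nat.card {x | G.Adj w.1 x} < Nat.card {x | G.Adj (φ w).1 x}) ∧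
        Nat.card {x | G.Adj u x} = Nat.card {x | G.Adj v x} := by
  refine ⟨5, Gex, 0, 4, Gex_conn, ?_⟩
  have hu : ∀ x : Fin 5, Gex.Adj 0 x → x = 1 := by decide
  have hv : ∀ x : Fin 5, Gex.Adj 4 x → x = 2 := by decide
  refine ⟨⟨fun _ => ⟨2, by decide⟩, fun _ => ⟨1, by decide⟩,
    fun w => Subtype.ext (hu w.1 w.2).symm,
    fun w => Subtype.ext (hv w.1 w.2).symm⟩, ?_, ?_, ?_⟩
  · intro w
    rw [show w.1 = 1 from hu w.1 w.2]
    simp only [Equiv.coe_fn_mk]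
    rw [card_nbr, card_nbr]
    decide
  · refine ⟨⟨1, by decide⟩, ?_⟩
    simp only [Equiv.coe_fn_mk]
    rw [card_nbr, card_nbr]
    decide
  · rw [card_nbr, card_nbr]; decide
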